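/- Let k be a field of characteristic 2 and consider the Laurent series φ̄ = Σ_{n=1}^∞ ν₂(2n)·(X^{-(2n−1)} + X^{-2n}) in F_2((X^{-1})), where ν₂(m) is the 2-adic valuation of m reduced mod 2. Then φ̄ satisfies φ̄² + (X+1)·φ̄ + 1 = 0. -/

import Mathlib

open Finset in
lemma sq_coeff_even_aux (x : LaurentSeries (ZMod 2)) (m : ℤ) :
    (x * x).coeff (2 * m) = x.coeff m * x.coeff m := by
  classical
  rw [HahnSeries.coeff_mul]
  rw [← Finset.sum_filter_add_sum_filter_not
      (Finset.antidiagonal x.isPWO_support x.isPWO_support (2 * m))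
      (fun p : ℤ × ℤ => p.1 = p.2)]
  have hoff : ∑ ij ∈ (Finset.antidiagonal x.isPWO_support x.isPWO_support (2 * m)).filter
      (fun p : ℤ × ℤ => ¬ p.1 = p.2), x.coeff ij.1 * x.coeff ij.2 = 0 := by
    apply Finset.sum_involution (g := fun a _ => Prod.swap a)
    · intro a _
      simp only [Prod.fst_swap, Prod.snd_swap]
      rw [mul_comm]
      exact CharTwo.add_self_eq_zero _
    · intro a ha _ h
      simp only [Finset.mem_filter] at ha
      have h1 : a.2 = a.1 := by simpa using congrArg Prod.fst h
      exact ha.2 h1.symm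
    · intro a ha
      simp only [Finset.mem_filter, Finset.mem_addAntidiagonal, Prod.fst_swap,
        Prod.snd_swap] at ha ⊢
      exact ⟨⟨ha.1.2.1, ha.1.1, by omega⟩, fun h => ha.2 h.symm⟩
    · intro a _
      simp
  rw [hoff, add_zero]
  have hsub : (Finset.antidiagonal x.isPWO_support x.isPWO_support (2 * m)).filter
      (fun p : ℤ × ℤ => p.1 = p.2) ⊆ {(m, m)} := by
    intro p hp
    simp only [Finset.mem_filter, Finset.mem_addAntidiagonal] at hp
    simp only [Finset.mem_singleton, Prod.ext_iff]
    omega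
  rw [Finset.sum_subset hsub ?_]
  · simp
  · intro p hp hnp
    simp only [Finset.mem_singleton] at hp
    subst hp
    by_cases hc : x.coeff m = 0
    · simp [hc]
    · exfalso
      apply hnp
      simp only [Finset.mem_filter, Finset.mem_addAntidiagonal, HahnSeries.mem_support]
      exact ⟨⟨hc, hc, by ring⟩, by trivial⟩

open Finset in
lemma sq_coeff_odd_aux (x : LaurentSeries (ZMod 2)) (k : ℤ) (hk : ¬ (2 ∣ k)) :
    (x * x).coeff k = 0 := by
  classical
  rw [HahnSeries.coeff_mul]
  apply Finset.sum_involution (g := fun a _ => Prod.swap a)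
  · intro a _
    simp only [Prod.fst_swap, Prod.snd_swap]
    rw [mul_comm]
    exact CharTwo.add_self_eq_zero _
  · intro a ha _ h
    simp only [Finset.mem_addAntidiagonal] at ha
    have h1 : a.2 = a.1 := by simpa using congrArg Prod.fst h
    exact hk ⟨a.1, by omega⟩
  · intro a ha
    simp only [Finset.mem_addAntidiagonal, Prod.fst_swap, Prod.snd_swap] at ha ⊢
    exact ⟨ha.2.1, ha.1, by omega⟩
  · intro a _
    simp

set_option maxHeartbeats 1000000 in
theorem goldenRatio_char_two_Xplus1_series (L : LaurentSeries (ZMod 2))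
    (h0 : ∀ m : ℤ, m ≤ 0 → L.coeff m = 0)
    (hodd : ∀ n : ℕ, 1 ≤ n → L.coeff (2 * (n : ℤ) - 1) = (padicValNat 2 (2 * n) : ZMod 2))
    (heven : ∀ n : ℕ, 1 ≤ n → L.coeff (2 * (n : ℤ)) = (padicValNat 2 (2 * n) : ZMod 2)) :
    L ^ 2 + (HahnSeries.single (-1 : ℤ) (1 : ZMod 2) + 1) * L + 1 = 0 := by
  have hval : ∀ n : ℕ, 1 ≤ n → padicValNat 2 (2 * n) = 1 + padicValNat 2 n := by
    intro n hn
    rw [padicValNat.mul (by norm_num) (by omega), padicValNat.self (by norm_num)]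
  have hsingle : ∀ k : ℤ, (HahnSeries.single (-1 : ℤ) (1 : ZMod 2) * L).coeff k
      = L.coeff (k + 1) := by
    intro k
    have := HahnSeries.coeff_single_mul_add (r := (1 : ZMod 2)) (x := L) (a := k + 1) (b := -1)
    simpa using this
  ext k
  rw [sq, add_mul, one_mul]
  simp only [HahnSeries.coeff_add, HahnSeries.coeff_one, HahnSeries.coeff_zero, hsingle]
  rcases le_or_gt k 0 with hk | hk
  · rcases eq_or_lt_of_le hk with rfl | hk'
    · -- k = 0
      have h1 := hodd 1 le_rfl
      have h2 := sq_coeff_even_aux L 0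
      have h3 := h0 0 le_rfl
      norm_num at h1 h2 ⊢
      rw [h2, h3, h1]
      decide
    · -- k < 0
      have hsq : (L * L).coeff k = 0 := by
        rcases Int.even_or_odd k with ⟨m, hm⟩ | hod
        · have : k = 2 * m := by omega
          rw [this, sq_coeff_even_aux]
          rw [h0 m (by omega)]; ring
        · exact sq_coeff_odd_aux L k (by rcases hod with ⟨m, hm⟩; omega)
      rw [hsq, h0 k (by omega), h0 (k + 1) (by omega), if_neg (by omega)]
      ring
  · -- k ≥ 1
    rw [if_neg (by omega)]
    rcases Int.even_or_odd k with ⟨m, hm⟩ | ⟨m, hm⟩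
    · -- k = 2m, m ≥ 1
      have hk2 : k = 2 * m := by omega
      have hm1 : 1 ≤ m := by omega
      obtain ⟨n, rfl⟩ : ∃ n : ℕ, m = (n : ℤ) := ⟨m.toNat, by omega⟩
      have hn1 : 1 ≤ n := by exact_mod_cast hm1
      subst hk2
      rw [sq_coeff_even_aux]
      have hA : L.coeff (2 * (n : ℤ)) = (padicValNat 2 (2 * n) : ZMod 2) := heven n hn1
      have hB : L.coeff (2 * (n : ℤ) + 1) = (padicValNat 2 (2 * (n + 1)) : ZMod 2) := by
        have := hodd (n + 1) (by omega)
        push_cast at this ⊢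
        convert this using 2
        ring
      rw [hA, hB]
      -- need : c_n * c_n + ν(2(n+1)) + ν(2n) = 0 in ZMod 2
      have hcn : L.coeff (n : ℤ) = ((padicValNat 2 n + padicValNat 2 (n + 1) : ℕ) : ZMod 2) := by
        rcases Nat.even_or_odd n with ⟨j, hj⟩ | ⟨j, hj⟩
        · -- n = 2j, j ≥ 1
          have hj1 : 1 ≤ j := by omega
          have : L.coeff (n : ℤ) = (padicValNat 2 (2 * j) : ZMod 2) := by
            have := heven j hj1
            convert this using 2
            push_cast; omega
          rw [this, hval j hj1]
          have hodd' : padicValNat 2 (n + 1) = 0 :=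
            padicValNat.eq_zero_of_not_dvd (by omega)
          have hvn : padicValNat 2 n = 1 + padicValNat 2 j := by
            have : n = 2 * j := by omega
            rw [this, hval j hj1]
          rw [hodd', hvn]
          push_cast
          ring
        · -- n = 2j+1
          have hj1 : 1 ≤ j + 1 := by omega
          have : L.coeff (n : ℤ) = (padicValNat 2 (2 * (j + 1)) : ZMod 2) := by
            have := hodd (j + 1) hj1
            convert this using 2
            push_cast; omega
          rw [this, hval (j + 1) hj1]
          have hoddn : padicValNat 2 n = 0 :=
            padicValNat.eq_zero_of_not_dvd (by omega)
          have hvn1 : padicValNat 2 (n + 1) = 1 + padicValNat 2 (j + 1) := by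
            have : n + 1 = 2 * (j + 1) := by omega
            rw [this, hval (j + 1) hj1]
          rw [hoddn, hvn1]
          push_cast
          ring
      rw [hcn, hval n hn1, hval (n + 1) (by omega)]
      have hsq : ∀ a : ZMod 2, a * a = a := by decide
      rw [hsq]
      push_cast
      have : ∀ a b : ZMod 2, a + b + (1 + b + (1 + a)) + 0 = 0 := by decide
      exact this _ _
    · -- k odd, k = 2m+1, m ≥ 0
      have hm0 : 0 ≤ m := by omega
      obtain ⟨n, rfl⟩ : ∃ n : ℕ, m = (n : ℤ) := ⟨m.toNat, by omega⟩
      have hsqo : (L * L).coeff k = 0 := sq_coeff_odd_aux L k (by omega)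
      have hA : L.coeff k = (padicValNat 2 (2 * (n + 1)) : ZMod 2) := by
        have := hodd (n + 1) (by omega)
        convert this using 2
        push_cast; omega
      have hB : L.coeff (k + 1) = (padicValNat 2 (2 * (n + 1)) : ZMod 2) := by
        have := heven (n + 1) (by omega)
        convert this using 2
        push_cast; omega
      rw [hsqo, hA, hB]
      have : ∀ a : ZMod 2, 0 + (a + a) + 0 = 0 := by decide
      exact this _
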